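/- Let R be a commutative ring, E ⊆ Spec(R), and π : R → ∏_{𝔭∈E} R/𝔭 the canonical ring homomorphism. Then for every prime ideal P of ∏_{𝔭∈E} R/𝔭, the contraction π⁻¹(P) lies in the Zariski closure of E in Spec(R). -/

import Mathlib

/-- Let `R` be a commutative ring, `E ⊆ Spec R`, and `π : R → ∏_{𝔭∈E} R/𝔭` the canonical
map. Then for every prime ideal `P` of `∏_{𝔭∈E} R/𝔭`, the contraction `π⁻¹(P)` lies in
the Zariski closure of `E` in `Spec R`. -/
theorem stmt_6 {R : Type*} [CommRing R] (E : Set (PrimeSpectrum R)) :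
    ∀ P : PrimeSpectrum (∀ p : E, R ⧸ (p : PrimeSpectrum R).asIdeal),
      PrimeSpectrum.comap
          (Pi.ringHom fun p : E => Ideal.Quotient.mk (p : PrimeSpectrum R).asIdeal) P ∈
        closure E := by
  intro P
  rw [← PrimeSpectrum.zeroLocus_vanishingIdeal_eq_closure, PrimeSpectrum.mem_zeroLocus]
  intro r hr
  rw [SetLike.mem_coe, PrimeSpectrum.mem_vanishingIdeal] at hr
  show r ∈ Ideal.comap _ P.asIdeal
  rw [Ideal.mem_comap]
  have : (Pi.ringHom fun p : E => Ideal.Quotient.mk (p : PrimeSpectrum R).asIdeal) r = 0 := by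
    ext p
    exact Ideal.Quotient.eq_zero_iff_mem.mpr (hr p p.2)
  rw [this]
  exact P.asIdeal.zero_mem
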